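/- Totient-twisted exponential sum bound via an exponent-pair hypothesis: Let 0 ≤ k ≤ 1/2 ≤ ℓ ≤ 1 be real numbers and C₀ > 0 be such that for all real X > 0 and all integers M, M₁ with 1 ≤ M < M₁ ≤ 2M one has |∑_{M < m ≤ M₁} e(X/m)| ≤ C₀·((X/M)^k·M^{ℓ−k} + M²/X). Then there is a constant C > 0 (depending only on k, ℓ, C₀) such that for all integers N, N₁ with 2 ≤ N < N₁ ≤ 2N and all real x ≥ N, |∑_{N < n ≤ N₁} φ(n)·e(x/n)| ≤ C·(x^k·N^{1+ℓ−2k}·log N + N³/x + N). -/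

import Mathlib

open Finset Real

noncomputable def e (z : ℝ) : ℂ := Complex.exp (2 * Real.pi * Complex.I * z)

lemma e_norm (z : ℝ) : ‖e z‖ = 1 := by
  have h : (2 * Real.pi * Complex.I * z) = ((2 * Real.pi * z : ℝ) : ℂ) * Complex.I := by
    push_cast; ring
  rw [e, h, Complex.norm_exp_ofReal_mul_I]

open ArithmeticFunction in
lemma totient_eq_sum (n : ℕ) (hn : 0 < n) :
    (Nat.totient n : ℂ) = ∑ p ∈ n.divisorsAntidiagonal, (moebius p.1 : ℂ) * p.2 :=
  ((ArithmeticFunction.sum_eq_iff_sum_mul_moebius_eq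
    (f := fun i => (Nat.totient i : ℂ)) (g := fun i => (i : ℂ))).mp
    (fun m _ => by rw [← Nat.cast_sum, Nat.sum_totient]) n hn).symm

open ArithmeticFunction in
lemma swap_sum (N N₁ : ℕ) (x : ℝ) :
    ∑ n ∈ Finset.Ioc N N₁, (Nat.totient n : ℂ) * e (x / n) =
      ∑ d ∈ Finset.Icc 1 N₁, (moebius d : ℂ) *
        ∑ m ∈ Finset.Ioc (N / d) (N₁ / d), (m : ℂ) * e (x / ((d : ℝ) * m)) := by
  have h1 : ∀ n ∈ Finset.Ioc N N₁, (Nat.totient n : ℂ) * e (x / n)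
      = ∑ p ∈ n.divisorsAntidiagonal,
          (moebius p.1 : ℂ) * ((p.2 : ℂ) * e (x / ((p.1 : ℝ) * p.2))) := by
    intro n hn
    simp only [Finset.mem_Ioc] at hn
    rw [totient_eq_sum n (by omega), Finset.sum_mul]
    refine Finset.sum_congr rfl fun p hp => ?_
    have hp' := (Nat.mem_divisorsAntidiagonal.mp hp).1
    have hc : ((p.1 : ℝ) * p.2) = (n : ℝ) := by exact_mod_cast congrArg (Nat.cast (R := ℝ)) hp'
    rw [hc]; ring
  rw [Finset.sum_congr rfl h1,
    Finset.sum_congr rfl (fun d _ => Finset.mul_sum (Finset.Ioc (N / d) (N₁ / d))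
      (fun m => (m : ℂ) * e (x / ((d : ℝ) * m))) ((moebius d : ℂ))),
    Finset.sum_sigma', Finset.sum_sigma']
  refine Finset.sum_nbij' (fun p => ⟨p.2.1, p.2.2⟩) (fun q => ⟨q.1 * q.2, (q.1, q.2)⟩)
    ?_ ?_ ?_ ?_ ?_
  · rintro ⟨n, p⟩ hp
    simp only [Finset.mem_sigma, Finset.mem_Ioc] at hp
    obtain ⟨⟨hn1, hn2⟩, hp2⟩ := hp
    obtain ⟨hmul, hn0⟩ := Nat.mem_divisorsAntidiagonal.mp hp2
    have hp1pos : 0 < p.1 := by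
      rcases Nat.eq_zero_or_pos p.1 with h | h
      · exfalso; rw [h, zero_mul] at hmul; omega
      · exact h
    have hp2pos : 0 < p.2 := by
      rcases Nat.eq_zero_or_pos p.2 with h | h
      · exfalso; rw [h, mul_zero] at hmul; omega
      · exact h
    simp only [Finset.mem_sigma, Finset.mem_Icc, Finset.mem_Ioc]
    refine ⟨⟨hp1pos, ?_⟩, ?_, ?_⟩
    · calc p.1 ≤ p.1 * p.2 := Nat.le_mul_of_pos_right _ hp2pos
        _ ≤ N₁ := by omega
    · rw [Nat.div_lt_iff_lt_mul hp1pos]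
      calc N < p.1 * p.2 := by omega
        _ = p.2 * p.1 := mul_comm _ _
    · rw [Nat.le_div_iff_mul_le hp1pos]
      calc p.2 * p.1 = p.1 * p.2 := mul_comm _ _
        _ ≤ N₁ := by omega
  · rintro ⟨d, m⟩ hq
    simp only [Finset.mem_sigma, Finset.mem_Icc, Finset.mem_Ioc] at hq
    obtain ⟨⟨hd1, hd2⟩, hm1, hm2⟩ := hq
    have hd0 : 0 < d := hd1
    have hN : N < d * m := by
      have := (Nat.div_lt_iff_lt_mul hd0).mp hm1
      calc N < m * d := this
        _ = d * m := mul_comm _ _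
    have hN₁ : d * m ≤ N₁ := by
      have := (Nat.le_div_iff_mul_le hd0).mp hm2
      calc d * m = m * d := mul_comm _ _
        _ ≤ N₁ := this
    rw [Finset.mem_sigma, Finset.mem_Ioc, Nat.mem_divisorsAntidiagonal]
    exact ⟨⟨hN, hN₁⟩, rfl, (Nat.mul_pos hd0 (Nat.lt_of_le_of_lt (Nat.zero_le _) hm1)).ne'⟩
  · rintro ⟨n, p⟩ hp
    simp only [Finset.mem_sigma] at hp
    obtain ⟨hmul, _⟩ := Nat.mem_divisorsAntidiagonal.mp hp.2
    subst hmul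
    rfl
  · rintro ⟨d, m⟩ _; rfl
  · rintro ⟨n, p⟩ _; rfl

lemma abel_swap (M M₂ : ℕ) (f : ℕ → ℂ) :
    ∑ m ∈ Finset.Ioc M M₂, (m : ℂ) * f m
      = ∑ j ∈ Finset.Icc 1 M₂, ∑ m ∈ Finset.Ioc (max M (j - 1)) M₂, f m := by
  have h := Finset.sum_comm' (s := Finset.Icc 1 M₂)
      (t := fun j => Finset.Ioc (max M (j - 1)) M₂)
      (t' := Finset.Ioc M M₂) (s' := fun m => Finset.Icc 1 m) (f := fun _ m => f m)
      (fun j m => by simp only [Finset.mem_Ioc, Finset.mem_Icc]; omega)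
  rw [h]
  refine Finset.sum_congr rfl fun m hm => ?_
  rw [Finset.sum_const, Nat.card_Icc, nsmul_eq_mul]
  norm_num

lemma sum_inv_le (N : ℕ) (hN : 2 ≤ N) :
    ∑ d ∈ Finset.Icc 1 N, (d : ℝ)⁻¹ ≤ 3 * Real.log N := by
  have h1 : (∑ d ∈ Finset.Icc 1 N, (d : ℝ)⁻¹) = ((harmonic N : ℚ) : ℝ) := by
    rw [harmonic_eq_sum_Icc]; push_cast; rfl
  have h2 := harmonic_le_one_add_log N
  have h3 : Real.log 2 ≤ Real.log N :=
    Real.log_le_log (by norm_num) (by exact_mod_cast hN)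
  have h4 := Real.log_two_gt_d9
  rw [h1]; linarith

lemma sum_inv_sq_le (N : ℕ) : ∑ d ∈ Finset.Icc 1 N, ((d : ℝ) ^ 2)⁻¹ ≤ 2 := by
  have key : ∀ n : ℕ, 1 ≤ n → ∑ d ∈ Finset.Icc 1 n, ((d : ℝ) ^ 2)⁻¹ ≤ 2 - (n : ℝ)⁻¹ := by
    intro n hn
    induction n with
    | zero => omega
    | succ m ih =>
      rcases Nat.lt_or_ge 1 (m + 1) with h | h
      · have hm : 1 ≤ m := by omega
        have hsum := ih hm
        rw [Finset.sum_Icc_succ_top (by omega : 1 ≤ m + 1)]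
        have hm0 : (0 : ℝ) < m := by exact_mod_cast hm
        have hstep : ((m : ℝ) + 1)⁻¹ + (((m : ℝ) + 1) ^ 2)⁻¹ ≤ (m : ℝ)⁻¹ := by
          rw [← sub_nonneg]
          have hq : (m : ℝ)⁻¹ - (((m : ℝ) + 1)⁻¹ + (((m : ℝ) + 1) ^ 2)⁻¹)
              = ((m : ℝ) * ((m : ℝ) + 1) ^ 2)⁻¹ := by
            field_simp
            ring
          rw [hq]
          positivity
        push_cast
        linarith
      · have hm0 : m = 0 := by omega
        subst hm0
        norm_num
  rcases Nat.eq_zero_or_pos N with h | h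
  · simp [h]
  · have h2 := key N h
    have h3 : (0 : ℝ) < (N : ℝ)⁻¹ := by
      have : (0:ℝ) < N := by exact_mod_cast h
      positivity
    linarith

lemma nat_div_le (b d : ℕ) (hd : 0 < d) (a : ℕ) (h : a ≤ 2 * b) :
    a / d ≤ 2 * (b / d) + 1 := by
  have h1 : a / d ≤ 2 * b / d := Nat.div_le_div_right h
  have h2 : 2 * b = 2 * (b % d) + 2 * (b / d) * d := by
    conv_lhs => rw [← Nat.div_add_mod b d]
    ring
  have h3 : 2 * b / d = 2 * (b % d) / d + 2 * (b / d) := by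
    rw [h2, Nat.add_mul_div_right _ _ hd]
  have h4 : 2 * (b % d) / d ≤ 1 := by
    have hmod := Nat.mod_lt b hd
    exact Nat.le_of_lt_succ ((Nat.div_lt_iff_lt_mul hd).mpr (by omega))
  omega

lemma final_ineq (C₀ a b n lg : ℝ) (hC₀ : 0 < C₀) (ha : 0 ≤ a*lg) (hb : 0 ≤ b)
    (hn : 0 < n) (hlg : 0 < lg) (hle : n*lg ≤ a*lg) :
    (4*C₀*a + 3*n) * (3*lg) + 8*C₀*b*2 + n ≤ (28*C₀+10)*(a*lg + b + n) := by
  nlinarith [mul_nonneg hC₀.le ha, mul_nonneg hC₀.le hb, mul_nonneg hC₀.le hn.le,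
    mul_nonneg hn.le hlg.le]

set_option maxHeartbeats 2000000 in
/-- Totient-twisted exponential sum bound via an exponent-pair hypothesis. -/
theorem totient_twisted_exponential_sum (k ℓ C₀ : ℝ)
    (hk0 : 0 ≤ k) (hk : k ≤ 1 / 2) (hℓ : 1 / 2 ≤ ℓ) (hℓ1 : ℓ ≤ 1) (hC₀ : 0 < C₀)
    (hyp : ∀ X : ℝ, 0 < X → ∀ M M₁ : ℕ, 1 ≤ M → M < M₁ → M₁ ≤ 2 * M →
      ‖∑ m ∈ Finset.Ioc M M₁, e (X / m)‖ ≤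
        C₀ * ((X / M) ^ k * (M : ℝ) ^ (ℓ - k) + (M : ℝ) ^ 2 / X)) :
    ∃ C : ℝ, 0 < C ∧ ∀ N N₁ : ℕ, 2 ≤ N → N < N₁ → N₁ ≤ 2 * N → ∀ x : ℝ, (N : ℝ) ≤ x →
      ‖∑ n ∈ Finset.Ioc N N₁, (Nat.totient n : ℂ) * e (x / n)‖ ≤
        C * (x ^ k * (N : ℝ) ^ (1 + ℓ - 2 * k) * Real.log N + (N : ℝ) ^ 3 / x + N) := by
  have hlk : (0:ℝ) ≤ ℓ - k := by linarith
  refine ⟨28 * C₀ + 10, by positivity, ?_⟩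
  intro N N₁ hN2 hNN₁ hN₁2 x hxN
  have hN0 : (0:ℝ) < N := by
    have : (0:ℕ) < N := by omega
    exact_mod_cast this
  have hN1R : (1:ℝ) ≤ N := by
    have : (1:ℕ) ≤ N := by omega
    exact_mod_cast this
  have hx0 : (0:ℝ) < x := lt_of_lt_of_le hN0 hxN
  have hlogN : 0 < Real.log N := Real.log_pos (by exact_mod_cast (by omega : 1 < N))
  have hxk : (0:ℝ) ≤ x ^ k := Real.rpow_nonneg hx0.le k
  have hNL : (0:ℝ) ≤ (N:ℝ) ^ (1+ℓ-2*k) := Real.rpow_nonneg hN0.le _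
  have hNle : (N:ℝ) ≤ x ^ k * (N:ℝ) ^ (1+ℓ-2*k) := by
    have h1 : (N:ℝ) ^ k ≤ x ^ k := Real.rpow_le_rpow hN0.le hxN hk0
    have hNk : (0:ℝ) ≤ (N:ℝ) ^ k := Real.rpow_nonneg hN0.le k
    have h3 : (N:ℝ) ≤ (N:ℝ) ^ (k + (1+ℓ-2*k)) := by
      nth_rewrite 1 [← Real.rpow_one (N:ℝ)]
      apply Real.rpow_le_rpow_of_exponent_le hN1R
      linarith
    calc (N:ℝ) ≤ (N:ℝ) ^ (k + (1+ℓ-2*k)) := h3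
      _ = (N:ℝ)^k * (N:ℝ)^(1+ℓ-2*k) := Real.rpow_add hN0 _ _
      _ ≤ x^k * (N:ℝ)^(1+ℓ-2*k) := mul_le_mul_of_nonneg_right h1 hNL
  have hμ : ∀ d : ℕ, ‖((ArithmeticFunction.moebius d : ℤ) : ℂ)‖ ≤ 1 := by
    intro d
    have h : ‖((ArithmeticFunction.moebius d : ℤ) : ℂ)‖
        = |((ArithmeticFunction.moebius d : ℤ) : ℝ)| := by
      rw [← Complex.ofReal_intCast, Complex.norm_real, Real.norm_eq_abs]
    rw [h]
    exact_mod_cast ArithmeticFunction.abs_moebius_le_one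
  rw [swap_sum]
  -- Part A : d ≤ N
  have partA : ∀ d ∈ Finset.Icc 1 N,
      ‖(ArithmeticFunction.moebius d : ℂ) *
          ∑ m ∈ Finset.Ioc (N/d) (N₁/d), (m:ℂ) * e (x/((d:ℝ)*m))‖
        ≤ (4*C₀*(x^k*(N:ℝ)^(1+ℓ-2*k)) + 3*(N:ℝ)) * (d:ℝ)⁻¹
            + (8*C₀*(N:ℝ)^3/x) * ((d:ℝ)^2)⁻¹ := by
    intro d hd
    simp only [Finset.mem_Icc] at hd
    obtain ⟨hd1, hdN⟩ := hd
    have hd0 : 0 < d := hd1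
    have hdR : (0:ℝ) < d := by exact_mod_cast hd0
    have hd1R : (1:ℝ) ≤ d := by exact_mod_cast hd1
    set M := N / d with hM
    set M₁' := N₁ / d with hM₁'
    set M₂ := min M₁' (2 * M) with hM₂
    have hM1 : 1 ≤ M := (Nat.one_le_div_iff hd0).mpr hdN
    have hM1R : (1:ℝ) ≤ M := by exact_mod_cast hM1
    have hMM₁ : M ≤ M₁' := Nat.div_le_div_right (le_of_lt hNN₁)
    have hM₁le : M₁' ≤ 2 * M + 1 := nat_div_le N d hd0 N₁ hN₁2
    have hMM₂ : M ≤ M₂ := le_min hMM₁ (by omega)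
    have hM₂M₁ : M₂ ≤ M₁' := min_le_left _ _
    have hMleNd : (M:ℝ) ≤ (N:ℝ)/d := by
      rw [le_div_iff₀ hdR]
      exact_mod_cast Nat.div_mul_le_self N d
    have hlt : N < M * d + d := Nat.lt_div_mul_add hd0
    have hN2Md : (N:ℝ) ≤ 2*((M:ℝ)*d) := by
      have hltR : (N:ℝ) < (M:ℝ)*d + d := by exact_mod_cast hlt
      nlinarith [mul_nonneg (sub_nonneg.mpr hM1R) hdR.le]
    -- abbreviation for the main per-dyadic bound
    have hBd0 : (0:ℝ) ≤ C₀ * ((2*x/(N:ℝ))^k * (2*(N:ℝ)/(d:ℝ))^(ℓ-k)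
        + (2*(N:ℝ)/(d:ℝ))^2 / (x/(d:ℝ))) := by
      apply mul_nonneg hC₀.le
      apply add_nonneg
      · exact mul_nonneg (Real.rpow_nonneg (by positivity) _)
          (Real.rpow_nonneg (by positivity) _)
      · exact div_nonneg (by positivity) (by positivity)
    -- bound on the A-part
    have hA : ‖∑ m ∈ Finset.Ioc M M₂, (m:ℂ) * e (x/((d:ℝ)*m))‖
        ≤ (2*(N:ℝ)/(d:ℝ)) * (C₀ * ((2*x/(N:ℝ))^k * (2*(N:ℝ)/(d:ℝ))^(ℓ-k)
            + (2*(N:ℝ)/(d:ℝ))^2 / (x/(d:ℝ)))) := by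
      rcases Nat.lt_or_ge M M₂ with hc | hc
      · rw [abel_swap]
        have hSj : ∀ j ∈ Finset.Icc 1 M₂,
            ‖∑ m ∈ Finset.Ioc (max M (j-1)) M₂, e (x/((d:ℝ)*m))‖
              ≤ C₀ * ((2*x/(N:ℝ))^k * (2*(N:ℝ)/(d:ℝ))^(ℓ-k)
                  + (2*(N:ℝ)/(d:ℝ))^2 / (x/(d:ℝ))) := by
          intro j hj
          simp only [Finset.mem_Icc] at hj
          set M' := max M (j - 1) with hM'
          have h1M' : 1 ≤ M' := le_trans hM1 (le_max_left _ _)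
          have hM'R : (0:ℝ) < M' := by exact_mod_cast h1M'
          have hM'lt : M' < M₂ := by omega
          have h2M' : M₂ ≤ 2 * M' := by omega
          have hhyp := hyp (x/d) (by positivity) M' M₂ h1M' hM'lt h2M'
          simp only [div_div] at hhyp
          refine le_trans hhyp ?_
          have hMM' : (M:ℝ) ≤ (M':ℝ) := by exact_mod_cast le_max_left M (j-1)
          have hM'2Nd : (M':ℝ) ≤ 2*(N:ℝ)/(d:ℝ) := by
            have h1 : M' ≤ 2*M := by omega
            have h1R : (M':ℝ) ≤ 2*(M:ℝ) := by exact_mod_cast h1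
            calc (M':ℝ) ≤ 2*(M:ℝ) := h1R
              _ ≤ 2*((N:ℝ)/d) := by linarith
              _ = 2*(N:ℝ)/d := by ring
          have hbase : x/((d:ℝ)*(M':ℝ)) ≤ 2*x/(N:ℝ) := by
            have hdM' : (0:ℝ) < (d:ℝ)*(M':ℝ) := mul_pos hdR hM'R
            rw [div_le_div_iff₀ hdM' hN0]
            have hstep : (N:ℝ) ≤ 2*((d:ℝ)*(M':ℝ)) := by nlinarith
            calc x*(N:ℝ) ≤ x*(2*((d:ℝ)*(M':ℝ))) := mul_le_mul_of_nonneg_left hstep hx0.le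
              _ = 2*x*((d:ℝ)*(M':ℝ)) := by ring
          gcongr
        calc ‖∑ j ∈ Finset.Icc 1 M₂, ∑ m ∈ Finset.Ioc (max M (j-1)) M₂, e (x/((d:ℝ)*m))‖
            ≤ ∑ j ∈ Finset.Icc 1 M₂,
                ‖∑ m ∈ Finset.Ioc (max M (j-1)) M₂, e (x/((d:ℝ)*m))‖ := norm_sum_le _ _
          _ ≤ ∑ _j ∈ Finset.Icc 1 M₂, C₀ * ((2*x/(N:ℝ))^k * (2*(N:ℝ)/(d:ℝ))^(ℓ-k)
                + (2*(N:ℝ)/(d:ℝ))^2 / (x/(d:ℝ))) := Finset.sum_le_sum hSj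
          _ = (M₂:ℝ) * (C₀ * ((2*x/(N:ℝ))^k * (2*(N:ℝ)/(d:ℝ))^(ℓ-k)
                + (2*(N:ℝ)/(d:ℝ))^2 / (x/(d:ℝ)))) := by
              rw [Finset.sum_const, Nat.card_Icc, nsmul_eq_mul]
              norm_num
          _ ≤ (2*(N:ℝ)/(d:ℝ)) * (C₀ * ((2*x/(N:ℝ))^k * (2*(N:ℝ)/(d:ℝ))^(ℓ-k)
                + (2*(N:ℝ)/(d:ℝ))^2 / (x/(d:ℝ)))) := by
              apply mul_le_mul_of_nonneg_right _ hBd0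
              have h1 : M₂ ≤ 2*M := min_le_right _ _
              have h1R : (M₂:ℝ) ≤ 2*(M:ℝ) := by exact_mod_cast h1
              calc (M₂:ℝ) ≤ 2*(M:ℝ) := h1R
                _ ≤ 2*((N:ℝ)/d) := by linarith
                _ = 2*(N:ℝ)/d := by ring
      · rw [Finset.Ioc_eq_empty (by omega)]
        simp only [Finset.sum_empty, norm_zero]
        apply mul_nonneg (by positivity) hBd0
    -- bound on the B-part
    have hB : ‖∑ m ∈ Finset.Ioc M₂ M₁', (m:ℂ) * e (x/((d:ℝ)*m))‖ ≤ 3*(N:ℝ)/(d:ℝ) := by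
      calc ‖∑ m ∈ Finset.Ioc M₂ M₁', (m:ℂ) * e (x/((d:ℝ)*m))‖
          ≤ ∑ m ∈ Finset.Ioc M₂ M₁', ‖(m:ℂ) * e (x/((d:ℝ)*m))‖ := norm_sum_le _ _
        _ = ∑ m ∈ Finset.Ioc M₂ M₁', (m:ℝ) := by
            refine Finset.sum_congr rfl fun m _ => ?_
            rw [norm_mul, e_norm, mul_one, Complex.norm_natCast]
        _ ≤ (Finset.Ioc M₂ M₁').card • ((2*M+1 : ℕ):ℝ) := by
            apply Finset.sum_le_card_nsmul
            intro m hm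
            simp only [Finset.mem_Ioc] at hm
            exact_mod_cast le_trans hm.2 hM₁le
        _ ≤ 1 * ((2*M+1 : ℕ):ℝ) := by
            rw [nsmul_eq_mul]
            apply mul_le_mul_of_nonneg_right _ (by positivity)
            rw [Nat.card_Ioc]
            have : M₁' - M₂ ≤ 1 := by omega
            exact_mod_cast this
        _ ≤ 3*(N:ℝ)/(d:ℝ) := by
            push_cast
            rw [one_mul]
            have h1 : 2*(M:ℝ)+1 ≤ 3*(M:ℝ) := by linarith
            calc 2*(M:ℝ)+1 ≤ 3*(M:ℝ) := h1
              _ ≤ 3*((N:ℝ)/d) := by linarith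
              _ = 3*(N:ℝ)/d := by ring
    -- combine and do the algebra
    have hsplit : ∑ m ∈ Finset.Ioc M M₁', (m:ℂ) * e (x/((d:ℝ)*m))
        = (∑ m ∈ Finset.Ioc M M₂, (m:ℂ) * e (x/((d:ℝ)*m)))
          + ∑ m ∈ Finset.Ioc M₂ M₁', (m:ℂ) * e (x/((d:ℝ)*m)) :=
      (Finset.sum_Ioc_consecutive _ hMM₂ hM₂M₁).symm
    rw [hsplit]
    have hT : ‖(ArithmeticFunction.moebius d : ℂ) *
        ((∑ m ∈ Finset.Ioc M M₂, (m:ℂ) * e (x/((d:ℝ)*m)))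
          + ∑ m ∈ Finset.Ioc M₂ M₁', (m:ℂ) * e (x/((d:ℝ)*m)))‖
        ≤ (2*(N:ℝ)/(d:ℝ)) * (C₀ * ((2*x/(N:ℝ))^k * (2*(N:ℝ)/(d:ℝ))^(ℓ-k)
            + (2*(N:ℝ)/(d:ℝ))^2 / (x/(d:ℝ)))) + 3*(N:ℝ)/(d:ℝ) := by
      rw [norm_mul]
      refine le_trans (mul_le_mul_of_nonneg_right (hμ d) (norm_nonneg _)) ?_
      rw [one_mul]
      exact le_trans (norm_add_le _ _) (add_le_add hA hB)
    refine le_trans hT ?_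
    -- final algebra for fixed d
    have hterm2 : (2*(N:ℝ)/(d:ℝ)) * (C₀ * ((2*(N:ℝ)/(d:ℝ))^2 / (x/(d:ℝ))))
        = (8*C₀*(N:ℝ)^3/x) * ((d:ℝ)^2)⁻¹ := by
      field_simp
      ring
    have hterm3 : 3*(N:ℝ)/(d:ℝ) = (3*(N:ℝ)) * ((d:ℝ))⁻¹ := by ring
    have hterm1 : (2*(N:ℝ)/(d:ℝ)) * (C₀ * ((2*x/(N:ℝ))^k * (2*(N:ℝ)/(d:ℝ))^(ℓ-k)))
        ≤ (4*C₀*(x^k*(N:ℝ)^(1+ℓ-2*k))) * ((d:ℝ))⁻¹ := by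
      have hp1 : (2*x/(N:ℝ))^k = (2:ℝ)^k * (x^k/(N:ℝ)^k) := by
        rw [show 2*x/(N:ℝ) = 2*(x/(N:ℝ)) by ring,
          Real.mul_rpow (by norm_num) (by positivity), Real.div_rpow hx0.le hN0.le]
      have hb0 : 2*(N:ℝ)/(d:ℝ) ≤ 2*(N:ℝ) := by
        rw [div_le_iff₀ hdR]
        nlinarith
      have hp2 : (2*(N:ℝ)/(d:ℝ))^(ℓ-k) ≤ (2:ℝ)^(ℓ-k) * (N:ℝ)^(ℓ-k) := by
        calc (2*(N:ℝ)/(d:ℝ))^(ℓ-k) ≤ (2*(N:ℝ))^(ℓ-k) :=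
              Real.rpow_le_rpow (by positivity) hb0 hlk
          _ = (2:ℝ)^(ℓ-k) * (N:ℝ)^(ℓ-k) := Real.mul_rpow (by norm_num) hN0.le
      have h2l : (2:ℝ)^k * (2:ℝ)^(ℓ-k) = (2:ℝ)^ℓ := by
        rw [← Real.rpow_add (by norm_num : (0:ℝ) < 2)]
        congr 1
        ring
      have h2le : (2:ℝ)^ℓ ≤ 2 := by
        calc (2:ℝ)^ℓ ≤ (2:ℝ)^(1:ℝ) := Real.rpow_le_rpow_of_exponent_le one_le_two hℓ1
          _ = 2 := Real.rpow_one 2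
      have hNpow : (N:ℝ)^(1+ℓ-2*k) = (N:ℝ)*(N:ℝ)^(ℓ-k)/(N:ℝ)^k := by
        rw [show (1+ℓ-2*k) = 1+(ℓ-k)-k by ring, Real.rpow_sub hN0,
          Real.rpow_add hN0, Real.rpow_one]
      have hNk0 : (0:ℝ) < (N:ℝ)^k := Real.rpow_pos_of_pos hN0 k
      have hNlk0 : (0:ℝ) ≤ (N:ℝ)^(ℓ-k) := Real.rpow_nonneg hN0.le _
      have h2k0 : (0:ℝ) ≤ (2:ℝ)^k := Real.rpow_nonneg (by norm_num) k
      have hc1 : (0:ℝ) ≤ 2*(N:ℝ)/(d:ℝ) * C₀ * (2:ℝ)^k * (x^k/(N:ℝ)^k) :=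
        mul_nonneg (mul_nonneg (mul_nonneg (by positivity) hC₀.le) h2k0)
          (div_nonneg hxk hNk0.le)
      rw [hp1, hNpow]
      calc 2*(N:ℝ)/(d:ℝ) * (C₀ * ((2:ℝ)^k * (x^k/(N:ℝ)^k) * (2*(N:ℝ)/(d:ℝ))^(ℓ-k)))
          = (2*(N:ℝ)/(d:ℝ) * C₀ * (2:ℝ)^k * (x^k/(N:ℝ)^k)) * (2*(N:ℝ)/(d:ℝ))^(ℓ-k) := by
            ring
        _ ≤ (2*(N:ℝ)/(d:ℝ) * C₀ * (2:ℝ)^k * (x^k/(N:ℝ)^k))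
              * ((2:ℝ)^(ℓ-k) * (N:ℝ)^(ℓ-k)) := mul_le_mul_of_nonneg_left hp2 hc1
        _ = ((2:ℝ)^k * (2:ℝ)^(ℓ-k))
              * (2 * C₀ * (x^k*((N:ℝ)*(N:ℝ)^(ℓ-k)/(N:ℝ)^k)) * ((d:ℝ))⁻¹) := by
            ring
        _ = (2:ℝ)^ℓ * (2 * C₀ * (x^k*((N:ℝ)*(N:ℝ)^(ℓ-k)/(N:ℝ)^k)) * ((d:ℝ))⁻¹) := by
            rw [h2l]
        _ ≤ 2 * (2 * C₀ * (x^k*((N:ℝ)*(N:ℝ)^(ℓ-k)/(N:ℝ)^k)) * ((d:ℝ))⁻¹) := by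
            apply mul_le_mul_of_nonneg_right h2le
            apply mul_nonneg
            apply mul_nonneg (by positivity)
            · exact mul_nonneg hxk (div_nonneg (mul_nonneg hN0.le hNlk0) hNk0.le)
            · positivity
        _ = (4*C₀*(x^k*((N:ℝ)*(N:ℝ)^(ℓ-k)/(N:ℝ)^k))) * ((d:ℝ))⁻¹ := by ring
    calc (2*(N:ℝ)/(d:ℝ)) * (C₀ * ((2*x/(N:ℝ))^k * (2*(N:ℝ)/(d:ℝ))^(ℓ-k)
            + (2*(N:ℝ)/(d:ℝ))^2 / (x/(d:ℝ)))) + 3*(N:ℝ)/(d:ℝ)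
        = (2*(N:ℝ)/(d:ℝ)) * (C₀ * ((2*x/(N:ℝ))^k * (2*(N:ℝ)/(d:ℝ))^(ℓ-k)))
          + (2*(N:ℝ)/(d:ℝ)) * (C₀ * ((2*(N:ℝ)/(d:ℝ))^2 / (x/(d:ℝ))))
          + 3*(N:ℝ)/(d:ℝ) := by ring
      _ ≤ (4*C₀*(x^k*(N:ℝ)^(1+ℓ-2*k))) * ((d:ℝ))⁻¹ + (8*C₀*(N:ℝ)^3/x) * ((d:ℝ)^2)⁻¹
          + (3*(N:ℝ)) * ((d:ℝ))⁻¹ := by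
          rw [hterm2, hterm3]
          exact add_le_add (add_le_add hterm1 le_rfl) le_rfl
      _ = (4*C₀*(x^k*(N:ℝ)^(1+ℓ-2*k)) + 3*(N:ℝ)) * (d:ℝ)⁻¹
          + (8*C₀*(N:ℝ)^3/x) * ((d:ℝ)^2)⁻¹ := by ring
  -- Part B : N < d ≤ N₁
  have partB : ∀ d ∈ Finset.Ioc N N₁,
      ‖(ArithmeticFunction.moebius d : ℂ) *
          ∑ m ∈ Finset.Ioc (N/d) (N₁/d), (m:ℂ) * e (x/((d:ℝ)*m))‖ ≤ 1 := by
    intro d hd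
    simp only [Finset.mem_Ioc] at hd
    have hd0 : 0 < d := by omega
    have hNd : N / d = 0 := Nat.div_eq_of_lt hd.1
    have hN₁d : N₁ / d ≤ 1 :=
      Nat.le_of_lt_succ ((Nat.div_lt_iff_lt_mul hd0).mpr (by omega))
    rw [norm_mul]
    calc ‖(ArithmeticFunction.moebius d : ℂ)‖
          * ‖∑ m ∈ Finset.Ioc (N/d) (N₁/d), (m:ℂ) * e (x/((d:ℝ)*m))‖
        ≤ 1 * ‖∑ m ∈ Finset.Ioc (N/d) (N₁/d), (m:ℂ) * e (x/((d:ℝ)*m))‖ :=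
          mul_le_mul_of_nonneg_right (hμ d) (norm_nonneg _)
      _ = ‖∑ m ∈ Finset.Ioc (N/d) (N₁/d), (m:ℂ) * e (x/((d:ℝ)*m))‖ := one_mul _
      _ ≤ ∑ m ∈ Finset.Ioc (N/d) (N₁/d), ‖(m:ℂ) * e (x/((d:ℝ)*m))‖ := norm_sum_le _ _
      _ = ∑ m ∈ Finset.Ioc (N/d) (N₁/d), (m:ℝ) := by
          refine Finset.sum_congr rfl fun m _ => ?_
          rw [norm_mul, e_norm, mul_one, Complex.norm_natCast]
      _ ≤ 1 := by
          rw [hNd]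
          have hsub : Finset.Ioc 0 (N₁/d) ⊆ {1} := by
            intro m hm
            simp only [Finset.mem_Ioc] at hm
            simp only [Finset.mem_singleton]
            omega
          calc ∑ m ∈ Finset.Ioc 0 (N₁/d), (m:ℝ)
              ≤ ∑ m ∈ ({1} : Finset ℕ), (m:ℝ) :=
                Finset.sum_le_sum_of_subset_of_nonneg hsub (fun _ _ _ => by positivity)
            _ = 1 := by simp
  -- assemble
  calc ‖∑ d ∈ Finset.Icc 1 N₁, (ArithmeticFunction.moebius d : ℂ) *
          ∑ m ∈ Finset.Ioc (N/d) (N₁/d), (m:ℂ) * e (x/((d:ℝ)*m))‖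
      ≤ ∑ d ∈ Finset.Icc 1 N₁, ‖(ArithmeticFunction.moebius d : ℂ) *
          ∑ m ∈ Finset.Ioc (N/d) (N₁/d), (m:ℂ) * e (x/((d:ℝ)*m))‖ := norm_sum_le _ _
    _ = (∑ d ∈ Finset.Icc 1 N, ‖(ArithmeticFunction.moebius d : ℂ) *
          ∑ m ∈ Finset.Ioc (N/d) (N₁/d), (m:ℂ) * e (x/((d:ℝ)*m))‖)
        + ∑ d ∈ Finset.Ioc N N₁, ‖(ArithmeticFunction.moebius d : ℂ) *
          ∑ m ∈ Finset.Ioc (N/d) (N₁/d), (m:ℂ) * e (x/((d:ℝ)*m))‖ := by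
        rw [show Finset.Icc 1 N₁ = Finset.Ioc 0 N₁ from Finset.Icc_add_one_left_eq_Ioc 0 N₁,
          show Finset.Icc 1 N = Finset.Ioc 0 N from Finset.Icc_add_one_left_eq_Ioc 0 N]
        exact (Finset.sum_Ioc_consecutive _ (Nat.zero_le N) (le_of_lt hNN₁)).symm
    _ ≤ ((4*C₀*(x^k*(N:ℝ)^(1+ℓ-2*k)) + 3*(N:ℝ)) * (3*Real.log N)
          + (8*C₀*(N:ℝ)^3/x) * 2) + (N:ℝ) := by
        apply add_le_add
        · calc ∑ d ∈ Finset.Icc 1 N, ‖(ArithmeticFunction.moebius d : ℂ) *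
              ∑ m ∈ Finset.Ioc (N/d) (N₁/d), (m:ℂ) * e (x/((d:ℝ)*m))‖
              ≤ ∑ d ∈ Finset.Icc 1 N,
                  ((4*C₀*(x^k*(N:ℝ)^(1+ℓ-2*k)) + 3*(N:ℝ)) * (d:ℝ)⁻¹
                    + (8*C₀*(N:ℝ)^3/x) * ((d:ℝ)^2)⁻¹) := Finset.sum_le_sum partA
            _ = (4*C₀*(x^k*(N:ℝ)^(1+ℓ-2*k)) + 3*(N:ℝ))
                  * (∑ d ∈ Finset.Icc 1 N, (d:ℝ)⁻¹)
                + (8*C₀*(N:ℝ)^3/x) * ∑ d ∈ Finset.Icc 1 N, ((d:ℝ)^2)⁻¹ := by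
                rw [Finset.sum_add_distrib, Finset.mul_sum, Finset.mul_sum]
            _ ≤ (4*C₀*(x^k*(N:ℝ)^(1+ℓ-2*k)) + 3*(N:ℝ)) * (3*Real.log N)
                + (8*C₀*(N:ℝ)^3/x) * 2 := by
                have ha : (0:ℝ) ≤ 4*C₀*(x^k*(N:ℝ)^(1+ℓ-2*k)) + 3*(N:ℝ) := by
                  have h1 : (0:ℝ) ≤ C₀*(x^k*(N:ℝ)^(1+ℓ-2*k)) :=
                    mul_nonneg hC₀.le (mul_nonneg hxk hNL)
                  nlinarith [hN0.le]
                have hb : (0:ℝ) ≤ 8*C₀*(N:ℝ)^3/x :=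
                  div_nonneg (by positivity) hx0.le
                exact add_le_add
                  (mul_le_mul_of_nonneg_left (sum_inv_le N hN2) ha)
                  (mul_le_mul_of_nonneg_left (sum_inv_sq_le N) hb)
        · calc ∑ d ∈ Finset.Ioc N N₁, ‖(ArithmeticFunction.moebius d : ℂ) *
              ∑ m ∈ Finset.Ioc (N/d) (N₁/d), (m:ℂ) * e (x/((d:ℝ)*m))‖
              ≤ (Finset.Ioc N N₁).card • (1:ℝ) :=
                Finset.sum_le_card_nsmul _ _ _ partB
            _ = ((N₁ - N : ℕ):ℝ) := by rw [Nat.card_Ioc, nsmul_eq_mul, mul_one]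
            _ ≤ (N:ℝ) := by exact_mod_cast (by omega : N₁ - N ≤ N)
    _ ≤ (28 * C₀ + 10) * (x ^ k * (N:ℝ) ^ (1 + ℓ - 2 * k) * Real.log N
          + (N:ℝ) ^ 3 / x + N) := by
        have hA0 : (0:ℝ) ≤ x^k*(N:ℝ)^(1+ℓ-2*k)*Real.log N :=
          mul_nonneg (mul_nonneg hxk hNL) hlogN.le
        have hB0 : (0:ℝ) ≤ (N:ℝ)^3/x := div_nonneg (by positivity) hx0.le
        have hNlg : (N:ℝ)*Real.log N ≤ x^k*(N:ℝ)^(1+ℓ-2*k)*Real.log N :=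
          mul_le_mul_of_nonneg_right hNle hlogN.le
        have hfin := final_ineq C₀ (x^k*(N:ℝ)^(1+ℓ-2*k)) ((N:ℝ)^3/x) (N:ℝ)
          (Real.log N) hC₀ hA0 hB0 hN0 hlogN hNlg
        refine le_trans (le_of_eq ?_) hfin
        ring
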